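/- Let F be a finite field with q elements, let K be an algebraic closure of F, and let n ≥ 4 be an integer. Then the number of monic polynomials P ∈ F[X] of degree n such that either P has two distinct roots in K each of multiplicity at least 2, or P has a root in K of multiplicity at least 4, equals q^{n−2}. (This is the paper's explicit claim in §1.29: 'the probability that a polynomial of degree at least 4 over 𝔽_q has two double roots or worse — a quadruple root; a triple root is not enough — is q^{−2}', an instance of Example 5.27 of the paper.) -/

import Mathlib

open Polynomial

section Helpers

variable {F K : Type*} [Field F] [Fintype F] [Field K] [Algebra F K] [IsAlgClosure F K]

omit [Fintype F] [Field K] [Algebra F K] [IsAlgClosure F K] in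
lemma card_monic_aux (F : Type*) [Field F] [Fintype F] (m : ℕ) :
    Nat.card {P : Polynomial F // P.Monic ∧ P.natDegree = m} = Fintype.card F ^ m := by
  have hbij : Function.Bijective
      (fun P : {P : Polynomial F // P.Monic ∧ P.natDegree = m} =>
        fun i : Fin m => P.1.coeff i) := by
    constructor
    · rintro ⟨P, hP, hPd⟩ ⟨Q, hQ, hQd⟩ h
      ext i : 3
      rcases lt_trichotomy i m with hi | rfl | hi
      · exact congrFun h ⟨i, hi⟩
      · show P.coeff i = Q.coeff i
        rw [← hPd, hP.coeff_natDegree, hPd, ← hQd, hQ.coeff_natDegree]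
      · show P.coeff i = Q.coeff i
        rw [coeff_eq_zero_of_natDegree_lt (hPd ▸ hi), coeff_eq_zero_of_natDegree_lt (hQd ▸ hi)]
    · intro f
      set R : Polynomial F := ∑ i : Fin m, C (f i) * X ^ (i : ℕ) with hR
      have hRdeg : R.degree < (m : ℕ) := degree_sum_fin_lt f
      have hXdeg : (X ^ m : Polynomial F).degree = (m : ℕ) := degree_X_pow m
      have hmon : (X ^ m + R).Monic := (monic_X_pow m).add_of_left (hXdeg ▸ hRdeg)
      have hdeg : (X ^ m + R).natDegree = m := by
        have := degree_add_eq_left_of_degree_lt (p := X ^ m) (hXdeg ▸ hRdeg)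
        rw [hXdeg] at this
        exact natDegree_eq_of_degree_eq_some this
      refine ⟨⟨X ^ m + R, hmon, hdeg⟩, ?_⟩
      funext i
      have hcR : R.coeff (i : ℕ) = f i := by
        rw [hR, finset_sum_coeff]
        rw [Finset.sum_eq_single i]
        · simp
        · intro b _ hb
          simp only [coeff_C_mul, coeff_X_pow]
          rw [if_neg (by simpa [Fin.ext_iff, eq_comm] using hb), mul_zero]
        · simp
      simp only [coeff_add, coeff_X_pow, if_neg (Nat.ne_of_lt i.2), zero_add, hcR]
  rw [Nat.card_congr (Equiv.ofBijective _ hbij), Nat.card_eq_fintype_card, Fintype.card_fun,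
    Fintype.card_fin]

omit [Fintype F] [Field K] [Algebra F K] [IsAlgClosure F K] in
lemma decomp_exists_aux (n : ℕ) :
    ∀ P : Polynomial F, P.Monic → P.natDegree = n →
      ∃ S T : Polynomial F, Squarefree S ∧ S.Monic ∧ T.Monic ∧ P = S * T ^ 2 := by
  induction n using Nat.strong_induction_on with
  | _ n ih =>
  intro P hP hd
  by_cases hsq : Squarefree P
  · exact ⟨P, 1, hsq, hP, monic_one, by ring⟩
  · rw [Squarefree] at hsq
    push_neg at hsq
    obtain ⟨x, hxd, hxu⟩ := hsq
    have hx0 : x ≠ 0 := by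
      rintro rfl
      rw [mul_zero, zero_dvd_iff] at hxd
      exact hP.ne_zero hxd
    set y : Polynomial F := x * C x.leadingCoeff⁻¹ with hy
    have hym : y.Monic := monic_mul_leadingCoeff_inv hx0
    have hyu : IsUnit (C x.leadingCoeff⁻¹) :=
      isUnit_C.mpr (IsUnit.inv (isUnit_iff_ne_zero.mpr (leadingCoeff_ne_zero.mpr hx0)))
    have hassoc : Associated y x := associated_mul_unit_left x _ hyu
    have hyd : y * y ∣ P := ((hassoc.mul_mul hassoc).dvd).trans hxd
    have hydeg : 1 ≤ y.natDegree := by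
      by_contra h
      push_neg at h
      interval_cases hyd : y.natDegree
      · have : y = 1 := hym.natDegree_eq_zero.mp hyd
        exact hxu (hassoc.isUnit (by rw [this]; exact isUnit_one))
    obtain ⟨R, hR⟩ := hyd
    have hRm : R.Monic := (hym.mul hym).of_mul_monic_left (hR ▸ hP)
    have hRdeg : R.natDegree < n := by
      have : P.natDegree = y.natDegree + y.natDegree + R.natDegree := by
        rw [hR, (hym.mul hym).natDegree_mul hRm, hym.natDegree_mul hym]
      omega
    obtain ⟨S, T, hS, hSm, hTm, hST⟩ := ih R.natDegree (hd ▸ hRdeg) R hRm rfl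
    exact ⟨S, y * T, hS, hSm, hym.mul hTm, by rw [hR, hST]; ring⟩

omit [Fintype F] [Field K] [Algebra F K] [IsAlgClosure F K] in
lemma decomp_exists (P : Polynomial F) (hP : P.Monic) :
    ∃ S T : Polynomial F, Squarefree S ∧ S.Monic ∧ T.Monic ∧ P = S * T ^ 2 :=
  decomp_exists_aux P.natDegree P hP rfl

omit [IsAlgClosure F K] in
/-- root multiplicities of the image of a squarefree polynomial are at most 1. -/
lemma sqf_rm_le_one {S : Polynomial F} (hS : Squarefree S) (x : K) :
    (S.map (algebraMap F K)).rootMultiplicity x ≤ 1 := by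
  classical
  have hsep : S.Separable := PerfectField.separable_iff_squarefree.mpr hS
  have hsep' : (S.map (algebraMap F K)).Separable := hsep.map
  have hnodup := nodup_roots hsep'
  rw [← count_roots]
  exact (Multiset.nodup_iff_count_le_one.mp hnodup) x

omit [Fintype F] [IsAlgClosure F K] in
lemma rm_decomp {S T : Polynomial F} (hSm : S.Monic) (hTm : T.Monic) (x : K) :
    ((S * T ^ 2).map (algebraMap F K)).rootMultiplicity x =
      (S.map (algebraMap F K)).rootMultiplicity x
        + 2 * (T.map (algebraMap F K)).rootMultiplicity x := by
  have hS0 : S.map (algebraMap F K) ≠ 0 := (hSm.map _).ne_zero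
  have hT0 : T.map (algebraMap F K) ≠ 0 := (hTm.map _).ne_zero
  rw [Polynomial.map_mul, Polynomial.map_pow, sq,
    rootMultiplicity_mul (by simp [hS0, hT0, mul_ne_zero]),
    rootMultiplicity_mul (mul_ne_zero hT0 hT0)]
  ring

include K in
lemma decomp_unique {S₁ T₁ S₂ T₂ : Polynomial F}
    (hS₁ : Squarefree S₁) (hS₁m : S₁.Monic) (hT₁m : T₁.Monic)
    (hS₂ : Squarefree S₂) (hS₂m : S₂.Monic) (hT₂m : T₂.Monic)
    (h : S₁ * T₁ ^ 2 = S₂ * T₂ ^ 2) : S₁ = S₂ ∧ T₁ = T₂ := by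
  classical
  haveI : IsAlgClosed K := IsAlgClosure.isAlgClosed F
  have hK : ∀ x : K, (T₁.map (algebraMap F K)).rootMultiplicity x
      = (T₂.map (algebraMap F K)).rootMultiplicity x := by
    intro x
    have h1 := rm_decomp (K := K) hS₁m hT₁m x
    have h2 := rm_decomp (K := K) hS₂m hT₂m x
    rw [h] at h1
    have e1 := sqf_rm_le_one (K := K) hS₁ x
    have e2 := sqf_rm_le_one (K := K) hS₂ x
    omega
  have hroots : (T₁.map (algebraMap F K)).roots = (T₂.map (algebraMap F K)).roots := by
    ext x
    rw [count_roots, count_roots, hK x]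
  have hsplit₁ : Splits (T₁.map (algebraMap F K)) :=
    IsAlgClosed.splits _
  have hsplit₂ : Splits (T₂.map (algebraMap F K)) :=
    IsAlgClosed.splits _
  have hTT : T₁.map (algebraMap F K) = T₂.map (algebraMap F K) := by
    rw [hsplit₁.eq_prod_roots_of_monic (hT₁m.map _),
      hsplit₂.eq_prod_roots_of_monic (hT₂m.map _), hroots]
  have hT : T₁ = T₂ := map_injective _ (algebraMap F K).injective hTT
  subst hT
  refine ⟨?_, rfl⟩
  have hT0 : T₁ ^ 2 ≠ 0 := pow_ne_zero _ hT₁m.ne_zero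
  exact mul_right_cancel₀ hT0 h

include K in
lemma cond_iff {S T : Polynomial F} (hS : Squarefree S) (hSm : S.Monic) (hTm : T.Monic) :
    ((∃ x y : K, x ≠ y ∧
        2 ≤ ((S * T ^ 2).map (algebraMap F K)).rootMultiplicity x ∧
        2 ≤ ((S * T ^ 2).map (algebraMap F K)).rootMultiplicity y) ∨
      (∃ x : K, 4 ≤ ((S * T ^ 2).map (algebraMap F K)).rootMultiplicity x))
    ↔ 2 ≤ T.natDegree := by
  classical
  haveI : IsAlgClosed K := IsAlgClosure.isAlgClosed F
  have hsplit : Splits (T.map (algebraMap F K)) := IsAlgClosed.splits _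
  have hcard : Multiset.card (T.map (algebraMap F K)).roots = T.natDegree :=
    by rw [← hsplit.natDegree_eq_card_roots, natDegree_map]
  constructor
  · rintro (⟨x, y, hxy, hx, hy⟩ | ⟨x, hx⟩)
    · rw [rm_decomp hSm hTm] at hx hy
      have ex := sqf_rm_le_one (K := K) hS x
      have ey := sqf_rm_le_one (K := K) hS y
      have hxr : x ∈ (T.map (algebraMap F K)).roots := by
        rw [← Multiset.count_pos, count_roots]; omega
      have hyr : y ∈ (T.map (algebraMap F K)).roots := by
        rw [← Multiset.count_pos, count_roots]; omega
      have h2 : 2 ≤ (T.map (algebraMap F K)).roots.toFinset.card :=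
        Finset.one_lt_card.mpr ⟨x, Multiset.mem_toFinset.mpr hxr, y,
          Multiset.mem_toFinset.mpr hyr, hxy⟩
      calc 2 ≤ (T.map (algebraMap F K)).roots.toFinset.card := h2
        _ ≤ Multiset.card (T.map (algebraMap F K)).roots := Multiset.toFinset_card_le _
        _ = T.natDegree := hcard
    · rw [rm_decomp hSm hTm] at hx
      have ex := sqf_rm_le_one (K := K) hS x
      have h2 : 2 ≤ (T.map (algebraMap F K)).rootMultiplicity x := by omega
      rw [← count_roots] at h2
      calc 2 ≤ _ := h2
        _ ≤ Multiset.card (T.map (algebraMap F K)).roots := Multiset.count_le_card _ _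
        _ = T.natDegree := hcard
  · intro h2
    have h2' : 2 ≤ Multiset.card (T.map (algebraMap F K)).roots := hcard ▸ h2
    obtain ⟨x, hxr⟩ := Multiset.card_pos_iff_exists_mem.mp
      (show 0 < Multiset.card (T.map (algebraMap F K)).roots by omega)
    by_cases hy : ∃ y ∈ (T.map (algebraMap F K)).roots, y ≠ x
    · obtain ⟨y, hyr, hyx⟩ := hy
      left
      have cx : 1 ≤ Multiset.count x (T.map (algebraMap F K)).roots :=
        Multiset.one_le_count_iff_mem.mpr hxr
      have cy : 1 ≤ Multiset.count y (T.map (algebraMap F K)).roots :=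
        Multiset.one_le_count_iff_mem.mpr hyr
      rw [count_roots] at cx cy
      refine ⟨x, y, hyx.symm, ?_, ?_⟩ <;> rw [rm_decomp hSm hTm] <;> omega
    · push_neg at hy
      right
      refine ⟨x, ?_⟩
      rw [rm_decomp hSm hTm]
      have : Multiset.count x (T.map (algebraMap F K)).roots
          = Multiset.card (T.map (algebraMap F K)).roots := by
        rw [Multiset.count_eq_card]
        intro b hb
        exact (hy b hb).symm
      rw [count_roots] at this
      omega

omit [Fintype F] [Field K] [Algebra F K] [IsAlgClosure F K] in
lemma coeff_lin_comb (U : Polynomial F) (c₁ c₂ : F) :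
    (X ^ 2 * U + (C c₁ * X + C c₂)).coeff 0 = c₂ ∧
      (X ^ 2 * U + (C c₁ * X + C c₂)).coeff 1 = c₁ := by
  have h0 : (X ^ 2 * U : Polynomial F).coeff 0 = 0 := by
    rw [mul_comm, coeff_mul_X_pow']; simp
  have h1 : (X ^ 2 * U : Polynomial F).coeff 1 = 0 := by
    rw [mul_comm, coeff_mul_X_pow']; simp
  constructor <;> simp [coeff_add, h0, h1, coeff_C]

omit [Fintype F] [Field K] [Algebra F K] [IsAlgClosure F K] in
lemma Tcomp_monic {U : Polynomial F} (hU : U.Monic) (c₁ c₂ : F) :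
    (X ^ 2 * U + (C c₁ * X + C c₂)).Monic ∧
      (X ^ 2 * U + (C c₁ * X + C c₂)).natDegree = U.natDegree + 2 := by
  have hXU : (X ^ 2 * U : Polynomial F).Monic := (monic_X_pow 2).mul hU
  have hXUdeg : (X ^ 2 * U : Polynomial F).natDegree = U.natDegree + 2 := by
    rw [(monic_X_pow 2).natDegree_mul hU, natDegree_X_pow]; omega
  have hL : (C c₁ * X + C c₂ : Polynomial F).degree < (X ^ 2 * U).degree := by
    calc (C c₁ * X + C c₂ : Polynomial F).degree ≤ 1 := degree_linear_le
      _ < ((U.natDegree + 2 : ℕ) : WithBot ℕ) := by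
          exact_mod_cast (by omega : 1 < U.natDegree + 2)
      _ = (X ^ 2 * U : Polynomial F).degree := by
          rw [degree_eq_natDegree hXU.ne_zero, hXUdeg]
  refine ⟨hXU.add_of_left hL, ?_⟩
  have := degree_add_eq_left_of_degree_lt hL
  rw [degree_eq_natDegree hXU.ne_zero, hXUdeg] at this
  exact natDegree_eq_of_degree_eq_some this

omit [Fintype F] [Field K] [Algebra F K] [IsAlgClosure F K] in
lemma T_decomp {T : Polynomial F} (hTm : T.Monic) (h2 : 2 ≤ T.natDegree) :
    ∃ U : Polynomial F, U.Monic ∧ U.natDegree + 2 = T.natDegree ∧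
      T = X ^ 2 * U + (C (T.coeff 1) * X + C (T.coeff 0)) := by
  set M := T %ₘ X ^ 2 with hM
  set U := T /ₘ X ^ 2 with hU
  have hmod : M + X ^ 2 * U = T := modByMonic_add_div T (X ^ 2)
  have hMdeg : M.degree < 2 := by
    have := degree_modByMonic_lt T (monic_X_pow (R := F) 2)
    rwa [degree_X_pow] at this
  have hM1 : M.degree ≤ 1 := by
    by_cases hM0 : M = 0
    · rw [hM0, degree_zero]; exact bot_le
    · have : M.natDegree < 2 := (natDegree_lt_iff_degree_lt hM0).mpr hMdeg
      calc M.degree ≤ (M.natDegree : WithBot ℕ) := degree_le_natDegree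
        _ ≤ 1 := by exact_mod_cast (by omega : M.natDegree ≤ 1)
  have hTdeg : ((1 : ℕ) : WithBot ℕ) < T.degree := by
    rw [degree_eq_natDegree hTm.ne_zero]
    exact_mod_cast (by omega : 1 < T.natDegree)
  have hMT : M.degree < T.degree := lt_of_le_of_lt hM1 (by exact_mod_cast hTdeg)
  have hXU : X ^ 2 * U = T - M := eq_sub_of_add_eq' hmod
  have hXUm : (X ^ 2 * U : Polynomial F).Monic := by
    rw [hXU, sub_eq_add_neg]
    exact hTm.add_of_left (by rwa [degree_neg])
  have hUm : U.Monic := (monic_X_pow 2).of_mul_monic_left hXUm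
  have hXUdeg : (X ^ 2 * U : Polynomial F).natDegree = T.natDegree := by
    rw [hXU, sub_eq_add_neg]
    exact natDegree_eq_of_degree_eq_some
      (by rw [degree_add_eq_left_of_degree_lt (by rwa [degree_neg]),
        degree_eq_natDegree hTm.ne_zero])
  have hUdeg : U.natDegree + 2 = T.natDegree := by
    rw [← hXUdeg, (monic_X_pow 2).natDegree_mul hUm, natDegree_X_pow]; omega
  have hMc0 : M.coeff 0 = T.coeff 0 := by
    have := congrArg (fun p => coeff p 0) hmod
    simpa [coeff_add, (by rw [mul_comm, coeff_mul_X_pow']; simp :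
      (X ^ 2 * U : Polynomial F).coeff 0 = 0)] using this
  have hMc1 : M.coeff 1 = T.coeff 1 := by
    have := congrArg (fun p => coeff p 1) hmod
    simpa [coeff_add, (by rw [mul_comm, coeff_mul_X_pow']; simp :
      (X ^ 2 * U : Polynomial F).coeff 1 = 0)] using this
  refine ⟨U, hUm, hUdeg, ?_⟩
  conv_lhs => rw [← hmod]
  rw [eq_X_add_C_of_degree_le_one hM1, hMc0, hMc1]
  ring

end Helpers

/-- Over a finite field with `q` elements, the number of monic polynomials of degree
`n ≥ 4` having either two distinct roots of multiplicity at least 2 in an algebraic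
closure, or a root of multiplicity at least 4, equals `q^{n−2}` (the instance of
Example 5.27 of the paper stated in §1.29: "the probability that a polynomial of degree
at least 4 has two double roots or worse is `q^{−2}`"). -/
theorem stmt8 (F K : Type*) [Field F] [Fintype F] (q : ℕ) (hq : Fintype.card F = q)
    [Field K] [Algebra F K] [IsAlgClosure F K] (n : ℕ) (hn : 4 ≤ n) :
    Nat.card {P : Polynomial F // P.Monic ∧ P.natDegree = n ∧
        ((∃ x y : K, x ≠ y ∧
            2 ≤ (P.map (algebraMap F K)).rootMultiplicity x ∧
            2 ≤ (P.map (algebraMap F K)).rootMultiplicity y) ∨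
          (∃ x : K, 4 ≤ (P.map (algebraMap F K)).rootMultiplicity x))}
      = q ^ (n - 2) := by
  classical
  subst hq
  have hdegST : ∀ {S T : Polynomial F}, S.Monic → T.Monic →
      (S * T ^ 2).natDegree = S.natDegree + 2 * T.natDegree := by
    intro S T hS hT
    rw [hS.natDegree_mul (hT.pow 2), natDegree_pow]
  -- Step 1: unique decomposition P = S * T², S squarefree; the condition means deg T ≥ 2.
  have h1 : Nat.card {P : Polynomial F // P.Monic ∧ P.natDegree = n ∧
        ((∃ x y : K, x ≠ y ∧
            2 ≤ (P.map (algebraMap F K)).rootMultiplicity x ∧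
            2 ≤ (P.map (algebraMap F K)).rootMultiplicity y) ∨
          (∃ x : K, 4 ≤ (P.map (algebraMap F K)).rootMultiplicity x))}
      = Nat.card {st : Polynomial F × Polynomial F // Squarefree st.1 ∧ st.1.Monic ∧
          st.2.Monic ∧ st.1.natDegree + 2 * st.2.natDegree = n ∧ 2 ≤ st.2.natDegree} := by
    symm
    apply Nat.card_congr
    refine Equiv.ofBijective (fun st => ⟨st.1.1 * st.1.2 ^ 2, ?_⟩) ⟨?_, ?_⟩
    · obtain ⟨⟨S, T⟩, hS, hSm, hTm, hd, h2⟩ := st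
      exact ⟨hSm.mul (hTm.pow 2), by rw [hdegST hSm hTm]; exact hd,
        (cond_iff (K := K) hS hSm hTm).mpr h2⟩
    · rintro ⟨⟨S₁, T₁⟩, hS₁, hS₁m, hT₁m, hd₁, h2₁⟩ ⟨⟨S₂, T₂⟩, hS₂, hS₂m, hT₂m, hd₂, h2₂⟩ hab
      have h' : S₁ * T₁ ^ 2 = S₂ * T₂ ^ 2 := congrArg Subtype.val hab
      obtain ⟨e1, e2⟩ := decomp_unique (K := K) hS₁ hS₁m hT₁m hS₂ hS₂m hT₂m h'
      exact Subtype.ext (Prod.ext_iff.mpr ⟨e1, e2⟩)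
    · rintro ⟨P, hPm, hPd, hcond⟩
      obtain ⟨S, T, hS, hSm, hTm, rfl⟩ := decomp_exists P hPm
      exact ⟨⟨(S, T), hS, hSm, hTm, by rw [← hdegST hSm hTm]; exact hPd,
        (cond_iff (K := K) hS hSm hTm).mp hcond⟩, Subtype.ext rfl⟩
  -- Step 2: T (monic, deg ≥ 2) corresponds to (c₁, c₂, U) with T = X²U + c₁X + c₂.
  have h2 : Nat.card {st : Polynomial F × Polynomial F // Squarefree st.1 ∧ st.1.Monic ∧
        st.2.Monic ∧ st.1.natDegree + 2 * st.2.natDegree = n ∧ 2 ≤ st.2.natDegree}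
      = Nat.card (F × F × {su : Polynomial F × Polynomial F // Squarefree su.1 ∧ su.1.Monic ∧
          su.2.Monic ∧ su.1.natDegree + 2 * su.2.natDegree = n - 4}) := by
    symm
    apply Nat.card_congr
    refine Equiv.ofBijective
      (fun c => ⟨(c.2.2.1.1, X ^ 2 * c.2.2.1.2 + (C c.1 * X + C c.2.1)), ?_⟩) ⟨?_, ?_⟩
    · obtain ⟨c₁, c₂, ⟨⟨S, U⟩, hS, hSm, hUm, hd⟩⟩ := c
      have hUm' : U.Monic := hUm
      obtain ⟨hm, hdm⟩ := Tcomp_monic hUm' c₁ c₂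
      have hd' : S.natDegree + 2 * U.natDegree = n - 4 := hd
      refine ⟨hS, hSm, hm, ?_, ?_⟩
      · show S.natDegree + 2 * (X ^ 2 * U + (C c₁ * X + C c₂)).natDegree = n
        rw [hdm]; omega
      · show 2 ≤ (X ^ 2 * U + (C c₁ * X + C c₂)).natDegree
        rw [hdm]; omega
    · rintro ⟨c₁, c₂, ⟨⟨S, U⟩, p1, p2, p3, p4⟩⟩ ⟨c₁', c₂', ⟨⟨S', U'⟩, q1, q2, q3, q4⟩⟩ hab
      have h' := congrArg Subtype.val hab
      rw [Prod.ext_iff] at h'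
      obtain ⟨hSS, hTT⟩ := h'
      simp only at hSS hTT
      have h0 := congrArg (fun p => coeff p 0) hTT
      have h1c := congrArg (fun p => coeff p 1) hTT
      simp only [(coeff_lin_comb U c₁ c₂).1, (coeff_lin_comb U c₁ c₂).2,
        (coeff_lin_comb U' c₁' c₂').1, (coeff_lin_comb U' c₁' c₂').2] at h0 h1c
      subst h0 h1c
      have hUU : U = U' := by
        have := add_right_cancel hTT
        exact mul_left_cancel₀ (pow_ne_zero 2 X_ne_zero) this
      refine Prod.ext_iff.mpr ⟨rfl, Prod.ext_iff.mpr ⟨rfl, ?_⟩⟩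
      exact Subtype.ext (Prod.ext_iff.mpr ⟨hSS, hUU⟩)
    · rintro ⟨⟨S, T⟩, hS, hSm, hTm, hd, h2T⟩
      have hTm' : T.Monic := hTm
      have hdn : S.natDegree + 2 * T.natDegree = n := hd
      obtain ⟨U, hUm, hUdeg, hTeq⟩ := T_decomp hTm' h2T
      refine ⟨(T.coeff 1, T.coeff 0, ⟨(S, U), hS, hSm, hUm,
        show S.natDegree + 2 * U.natDegree = n - 4 by omega⟩), ?_⟩
      exact Subtype.ext (Prod.ext_iff.mpr ⟨rfl, hTeq.symm⟩)
  -- Step 3: pairs (S, U) correspond to monic polynomials of degree n - 4.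
  have h3 : Nat.card {su : Polynomial F × Polynomial F // Squarefree su.1 ∧ su.1.Monic ∧
        su.2.Monic ∧ su.1.natDegree + 2 * su.2.natDegree = n - 4}
      = Nat.card {P : Polynomial F // P.Monic ∧ P.natDegree = n - 4} := by
    apply Nat.card_congr
    refine Equiv.ofBijective (fun su => ⟨su.1.1 * su.1.2 ^ 2, ?_⟩) ⟨?_, ?_⟩
    · obtain ⟨⟨S, U⟩, hS, hSm, hUm, hd⟩ := su
      exact ⟨hSm.mul (hUm.pow 2), by rw [hdegST hSm hUm]; exact hd⟩
    · rintro ⟨⟨S₁, T₁⟩, hS₁, hS₁m, hT₁m, hd₁⟩ ⟨⟨S₂, T₂⟩, hS₂, hS₂m, hT₂m, hd₂⟩ hab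
      have h' : S₁ * T₁ ^ 2 = S₂ * T₂ ^ 2 := congrArg Subtype.val hab
      obtain ⟨e1, e2⟩ := decomp_unique (K := K) hS₁ hS₁m hT₁m hS₂ hS₂m hT₂m h'
      exact Subtype.ext (Prod.ext_iff.mpr ⟨e1, e2⟩)
    · rintro ⟨P, hPm, hPd⟩
      obtain ⟨S, T, hS, hSm, hTm, rfl⟩ := decomp_exists P hPm
      exact ⟨⟨(S, T), hS, hSm, hTm, by rw [← hdegST hSm hTm]; exact hPd⟩, Subtype.ext rfl⟩
  rw [h1, h2, Nat.card_prod, Nat.card_prod, h3, card_monic_aux, Nat.card_eq_fintype_card,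
    ← pow_succ', ← pow_succ']
  congr 1
  omega
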